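/- (Savage) Let {R_i}_{i=1}^n be a strictly proper scoring rule on n outcomes. Then its value function G(p) = Σ_{i=1}^n p_i R_i(p) is strictly convex on the probability simplex in ℝ^n. -/
import Mathlib


open BigOperators

/-- Savage: the value function `G(p) = ∑ i, p i * R i p` of a strictly proper
scoring rule `{R i}` on `n` outcomes is strictly convex on the probability simplex in `ℝ^n`. -/
theorem stmt_2 {n : ℕ} (R : Fin n → (Fin n → ℝ) → ℝ)
    (hproper : ∀ p ∈ stdSimplex ℝ (Fin n), ∀ q ∈ stdSimplex ℝ (Fin n),
      (∑ i, p i * R i q ≤ ∑ i, p i * R i p)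
        ∧ ((∑ i, p i * R i q = ∑ i, p i * R i p) ↔ p = q)) :
    StrictConvexOn ℝ (stdSimplex ℝ (Fin n)) (fun p => ∑ i, p i * R i p) := by
  refine ⟨convex_stdSimplex ℝ (Fin n), ?_⟩
  intro x hx y hy hxy a b ha hb hab
  set r := a • x + b • y with hr
  have hrmem : r ∈ stdSimplex ℝ (Fin n) :=
    (convex_stdSimplex ℝ (Fin n)) hx hy ha.le hb.le hab
  have hxr : x ≠ r := by
    intro h
    apply hxy
    have : b • x = b • y := by
      have h1 : (a + b) • x = a • x + b • y := by rw [hab, one_smul]; exact h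
      rw [add_smul] at h1
      exact add_left_cancel h1
    exact smul_right_injective _ hb.ne' this
  have hyr : y ≠ r := by
    intro h
    apply hxy
    have : a • x = a • y := by
      have h1 : (a + b) • y = a • x + b • y := by rw [hab, one_smul]; exact h
      rw [add_smul] at h1
      exact add_right_cancel h1.symm
    exact smul_right_injective _ ha.ne' this
  obtain ⟨hxle, hxiff⟩ := hproper x hx r hrmem
  obtain ⟨hyle, hyiff⟩ := hproper y hy r hrmem
  have hxlt : ∑ i, x i * R i r < ∑ i, x i * R i x :=
    lt_of_le_of_ne hxle (fun h => hxr (hxiff.1 h))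
  have hylt : ∑ i, y i * R i r < ∑ i, y i * R i y :=
    lt_of_le_of_ne hyle (fun h => hyr (hyiff.1 h))
  have hsplit : ∑ i, r i * R i r
      = a * ∑ i, x i * R i r + b * ∑ i, y i * R i r := by
    rw [Finset.mul_sum, Finset.mul_sum, ← Finset.sum_add_distrib]
    refine Finset.sum_congr rfl fun i _ => ?_
    simp [hr, add_mul, mul_assoc]
  calc ∑ i, r i * R i r = a * ∑ i, x i * R i r + b * ∑ i, y i * R i r := hsplit
    _ < a * ∑ i, x i * R i x + b * ∑ i, y i * R i y :=
      add_lt_add (mul_lt_mul_of_pos_left hxlt ha) (mul_lt_mul_of_pos_left hylt hb)
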